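/- Let d ≥ 3 be an integer, G = (V,E) a finite d-claw free graph, w : V → ℝ positive, A* an independent set of maximum weight, and A an independent set admitting no local improvement of w²(A) (in particular A is maximal, so charges are defined). With ε := 1/5308416, δ := 1/6 and B̄ := {v ∈ A : ∑_{u∈T_v} charge(u,v) > ((1−ε)/2)·w(v)}, if w(B̄) ≤ (1−δ)·w(A), then w(A*) ≤ ((d−εδ)/2)·w(A). -/

import Mathlib

open Finset

open scoped Classical

variable {V : Type*}

noncomputable section

/-- Neighborhood of `U` in `W`: vertices of `W` that lie in `U` or are adjacent to some
vertex of `U`. -/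
def nbhd (G : SimpleGraph V) (U W : Finset V) : Finset V :=
  W.filter (fun x => x ∈ U ∨ ∃ u ∈ U, G.Adj u x)

/-- Neighborhood of a single vertex `u` in `W`. -/
def nbhd1 (G : SimpleGraph V) (u : V) (W : Finset V) : Finset V :=
  nbhd G {u} W

/-- Total weight of a finite set of vertices. -/
def wsum (w : V → ℝ) (U : Finset V) : ℝ := ∑ x ∈ U, w x

/-- Total squared weight of a finite set of vertices. -/
def wsq (w : V → ℝ) (U : Finset V) : ℝ := ∑ x ∈ U, (w x) ^ 2

/-- A finite set of vertices is independent. -/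
def IsIndep (G : SimpleGraph V) (S : Finset V) : Prop :=
  ∀ a ∈ S, ∀ b ∈ S, a ≠ b → ¬ G.Adj a b

/-- `G` is `d`-claw free: every independent subset of the neighborhood of any vertex has
size at most `d - 1`. -/
def ClawFree (G : SimpleGraph V) (d : ℕ) : Prop :=
  ∀ v : V, ∀ S : Finset V, (∀ x ∈ S, G.Adj v x) → IsIndep G S → S.card ≤ d - 1

/-- `X` is a local improvement of `w²(A)`. -/
def LocalImprovement (G : SimpleGraph V) (d : ℕ) (w : V → ℝ) (A X : Finset V) : Prop :=
  IsIndep G X ∧ X.card ≤ (d - 1) ^ 2 + (d - 1) ∧ wsq w (nbhd G X A) < wsq w X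

/-- No claw improves `w²(A)`: `w²(T) ≤ w²(N(T,A))` for every independent set `T` that is a
singleton or whose vertices are all adjacent to a common vertex. -/
def NoClawImproves (G : SimpleGraph V) (w : V → ℝ) (A : Finset V) : Prop :=
  ∀ T : Finset V, IsIndep G T → (T.card = 1 ∨ ∃ v : V, ∀ x ∈ T, G.Adj v x) →
    wsq w T ≤ wsq w (nbhd G T A)

/-- The charge map, relative to a choice `n` of heaviest neighbors. -/
def charge (G : SimpleGraph V) (w : V → ℝ) (A : Finset V) (n : V → V) (u v : V) : ℝ :=
  if v = n u then w u - wsum w (nbhd1 G u A) / 2 else 0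

/-- `u ∈ T_v` is single (with `√ε = 1/2304`). -/
def IsSingle (G : SimpleGraph V) (w : V → ℝ) (A : Finset V) (u v : V) : Prop :=
  (1 - 1 / 2304 : ℝ) ≤ w u / w v ∧ w u / w v ≤ 1 + 1 / 2304 ∧
  wsum w (nbhd1 G u A) ≤ (1 + 1 / 2304) * w v

/-- `u ∈ T_v` is double (with `√ε = 1/2304`). -/
def IsDouble (G : SimpleGraph V) (w : V → ℝ) (A : Finset V) (u v : V) : Prop :=
  2 ≤ (nbhd1 G u A).card ∧
  ∃ v₂ ∈ (nbhd1 G u A).erase v, (∀ x ∈ (nbhd1 G u A).erase v, w x ≤ w v₂) ∧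
    (1 - 1 / 2304 : ℝ) ≤ w u / w v ∧ w u / w v ≤ 1 + 1 / 2304 ∧
    (1 - 1 / 2304 : ℝ) ≤ w v₂ / w v ∧ w v₂ / w v ≤ 1 ∧
    (2 - 1 / 2304) * w v ≤ wsum w (nbhd1 G u A) ∧ wsum w (nbhd1 G u A) < 2 * w u

/-- The contribution map. -/
def contr (G : SimpleGraph V) (w : V → ℝ) (A : Finset V) (u v : V) : ℝ :=
  if v ∈ nbhd1 G u A then max 0 (((w u) ^ 2 - wsq w ((nbhd1 G u A).erase v)) / w v) else 0

lemma mem_nbhd' {G : SimpleGraph V} {U A : Finset V} {x : V} :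
    x ∈ nbhd G U A ↔ x ∈ A ∧ (x ∈ U ∨ ∃ u ∈ U, G.Adj u x) := by
  simp [nbhd]

lemma mem_nbhd1' {G : SimpleGraph V} {u : V} {A : Finset V} {x : V} :
    x ∈ nbhd1 G u A ↔ x ∈ A ∧ (x = u ∨ G.Adj u x) := by
  simp [nbhd1, nbhd]

lemma wsq_nonneg (w : V → ℝ) (U : Finset V) : 0 ≤ wsq w U :=
  Finset.sum_nonneg fun _ _ => sq_nonneg _

lemma wsq_mono (w : V → ℝ) {S T : Finset V} (h : S ⊆ T) : wsq w S ≤ wsq w T :=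
  Finset.sum_le_sum_of_subset_of_nonneg h fun _ _ _ => sq_nonneg _

lemma sum_union_le' (f : V → ℝ) (hf : ∀ x, 0 ≤ f x) (s t : Finset V) :
    ∑ x ∈ s ∪ t, f x ≤ ∑ x ∈ s, f x + ∑ x ∈ t, f x := by
  rw [← Finset.union_sdiff_self_eq_union, Finset.sum_union Finset.disjoint_sdiff]
  exact add_le_add le_rfl
    (Finset.sum_le_sum_of_subset_of_nonneg (Finset.sdiff_subset) fun x _ _ => hf x)

lemma sum_biUnion_le' (f : V → ℝ) (hf : ∀ x, 0 ≤ f x) (s : Finset V) (t : V → Finset V) :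
    ∑ x ∈ s.biUnion t, f x ≤ ∑ i ∈ s, ∑ x ∈ t i, f x := by
  classical
  induction s using Finset.induction_on with
  | empty => simp
  | insert _ _ ha ih =>
    rename_i a s
    rw [Finset.biUnion_insert, Finset.sum_insert ha]
    exact le_trans (sum_union_le' f hf _ _) (by linarith)

theorem stmt15 [Fintype V] (G : SimpleGraph V) (d : ℕ) (hd : 3 ≤ d) (hG : ClawFree G d)
    (w : V → ℝ) (hw : ∀ v, 0 < w v) (Astar A : Finset V)
    (hAstarIndep : IsIndep G Astar)
    (hAstarMax : ∀ S : Finset V, IsIndep G S → wsum w S ≤ wsum w Astar)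
    (hAIndep : IsIndep G A) (hAmax : ∀ v : V, (nbhd1 G v A).Nonempty)
    (hNoImp : ∀ X : Finset V, ¬ LocalImprovement G d w A X)
    (n : V → V)
    (hn : ∀ u ∈ Astar, n u ∈ nbhd1 G u A ∧ ∀ x ∈ nbhd1 G u A, w x ≤ w (n u))
    (Bbar : Finset V)
    (hBbar : Bbar = A.filter (fun v =>
        (1 - 1 / 5308416 : ℝ) / 2 * w v
            < ∑ u ∈ Astar.filter (fun u => 0 < charge G w A n u v), charge G w A n u v))
    (hwBbar : wsum w Bbar ≤ (1 - 1 / 6 : ℝ) * wsum w A) :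
    wsum w Astar ≤ ((d : ℝ) - 1 / 5308416 * (1 / 6)) / 2 * wsum w A := by
  classical
  -- notation
  set ε : ℝ := (1 : ℝ) / 5308416 with hε
  -- Key lemma: total positive charge at any v ∈ A is at most w v / 2
  have key : ∀ v ∈ A,
      ∑ u ∈ Astar.filter (fun u => 0 < charge G w A n u v), charge G w A n u v ≤ w v / 2 := by
    intro v hvA
    set T : Finset V := Astar.filter (fun u => 0 < charge G w A n u v) with hT
    have hTsub : T ⊆ Astar := Finset.filter_subset _ _
    have hTmem : ∀ u ∈ T, u ∈ Astar ∧ v = n u := by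
      intro u hu
      rw [hT, Finset.mem_filter] at hu
      refine ⟨hu.1, ?_⟩
      by_contra h
      simp only [charge, if_neg h] at hu
      exact lt_irrefl _ hu.2
    have hvN : ∀ u ∈ T, v ∈ nbhd1 G u A := by
      intro u hu
      have := (hn u (hTmem u hu).1).1
      rw [(hTmem u hu).2]; exact this
    have hmaxw : ∀ u ∈ T, ∀ x ∈ nbhd1 G u A, w x ≤ w v := by
      intro u hu x hx
      have := (hn u (hTmem u hu).1).2 x hx
      rw [(hTmem u hu).2]; exact this
    -- per-u bound on the charge
    have hbound : ∀ u ∈ T,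
        charge G w A n u v ≤ (w u ^ 2 - wsq w ((nbhd1 G u A).erase v)) / (2 * w v) := by
      intro u hu
      have hc : charge G w A n u v = w u - wsum w (nbhd1 G u A) / 2 := by
        rw [charge, if_pos (hTmem u hu).2]
      have hsplit : wsum w (nbhd1 G u A) = w v + wsum w ((nbhd1 G u A).erase v) := by
        rw [wsum, wsum, ← Finset.add_sum_erase _ _ (hvN u hu)]
      have hQ : wsq w ((nbhd1 G u A).erase v)
          ≤ w v * wsum w ((nbhd1 G u A).erase v) := by
        rw [wsq, wsum, Finset.mul_sum]
        refine Finset.sum_le_sum fun x hx => ?_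
        have hxle : w x ≤ w v := hmaxw u hu x (Finset.mem_of_mem_erase hx)
        have := (hw x).le
        nlinarith
      rw [hc, hsplit, le_div_iff₀ (by have := hw v; linarith)]
      nlinarith [sq_nonneg (w u - w v)]
    -- T is a claw centered at v (minus possibly v itself), so no improvement gives:
    have hindep : IsIndep G T := fun a ha b hb => hAstarIndep a (hTsub ha) b (hTsub hb)
    have hadj : ∀ u ∈ T.erase v, G.Adj v u := by
      intro u hu
      have hne : u ≠ v := Finset.ne_of_mem_erase hu
      have := hvN u (Finset.mem_of_mem_erase hu)
      rw [mem_nbhd1'] at this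
      rcases this.2 with h | h
      · exact absurd h.symm hne
      · exact h.symm
    have hcard : T.card ≤ (d - 1) ^ 2 + (d - 1) := by
      have h1 : (T.erase v).card ≤ d - 1 := by
        refine hG v (T.erase v) hadj fun a ha b hb => hindep a (Finset.mem_of_mem_erase ha)
          b (Finset.mem_of_mem_erase hb)
      have h2 : T.card ≤ (T.erase v).card + 1 := by
        by_cases hv : v ∈ T
        · rw [Finset.card_erase_of_mem hv]; omega
        · rw [Finset.erase_eq_of_notMem hv]; omega
      have h3 : 2 ≤ d - 1 := by omega
      nlinarith [h1, h2, h3]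
    have hclaw : wsq w T ≤ wsq w (nbhd G T A) := by
      have := hNoImp T
      rw [LocalImprovement] at this
      push_neg at this
      exact this hindep hcard
    -- cover the neighborhood of T
    have hcover : nbhd G T A ⊆ insert v (T.biUnion fun u => (nbhd1 G u A).erase v) := by
      intro x hx
      rw [mem_nbhd'] at hx
      by_cases hxv : x = v
      · exact hxv ▸ Finset.mem_insert_self _ _
      · refine Finset.mem_insert_of_mem (Finset.mem_biUnion.mpr ?_)
        rcases hx.2 with h | ⟨u, hu, hadjux⟩
        · exact ⟨x, h, Finset.mem_erase.mpr ⟨hxv, mem_nbhd1'.mpr ⟨hx.1, Or.inl rfl⟩⟩⟩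
        · exact ⟨u, hu, Finset.mem_erase.mpr ⟨hxv, mem_nbhd1'.mpr ⟨hx.1, Or.inr hadjux⟩⟩⟩
    have hcov2 : wsq w (nbhd G T A)
        ≤ w v ^ 2 + ∑ u ∈ T, wsq w ((nbhd1 G u A).erase v) := by
      refine le_trans (wsq_mono w hcover) ?_
      have h1 : wsq w (insert v (T.biUnion fun u => (nbhd1 G u A).erase v))
          ≤ w v ^ 2 + wsq w (T.biUnion fun u => (nbhd1 G u A).erase v) := by
        by_cases hv : v ∈ T.biUnion fun u => (nbhd1 G u A).erase v
        · rw [Finset.insert_eq_of_mem hv]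
          nlinarith [sq_nonneg (w v)]
        · rw [wsq, Finset.sum_insert hv]; rfl
      refine le_trans h1 (by
        have := sum_biUnion_le' (fun x => w x ^ 2) (fun x => sq_nonneg _) T
          (fun u => (nbhd1 G u A).erase v)
        simp only [wsq]
        linarith)
    -- combine
    have hsum : ∑ u ∈ T, charge G w A n u v
        ≤ (wsq w T - ∑ u ∈ T, wsq w ((nbhd1 G u A).erase v)) / (2 * w v) := by
      calc ∑ u ∈ T, charge G w A n u v
          ≤ ∑ u ∈ T, (w u ^ 2 - wsq w ((nbhd1 G u A).erase v)) / (2 * w v) :=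
            Finset.sum_le_sum hbound
        _ = (∑ u ∈ T, (w u ^ 2 - wsq w ((nbhd1 G u A).erase v))) / (2 * w v) := by
            rw [Finset.sum_div]
        _ = (wsq w T - ∑ u ∈ T, wsq w ((nbhd1 G u A).erase v)) / (2 * w v) := by
            rw [Finset.sum_sub_distrib]; rfl
    have hfin : (wsq w T - ∑ u ∈ T, wsq w ((nbhd1 G u A).erase v)) / (2 * w v)
        ≤ w v / 2 := by
      rw [div_le_iff₀ (by have := hw v; linarith : (0:ℝ) < 2 * w v)]
      nlinarith [hclaw, hcov2]
    exact le_trans hsum hfin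
  -- decomposition of w(A*)
  have hwA : 0 ≤ wsum w A := Finset.sum_nonneg fun x _ => (hw x).le
  have hdecomp : wsum w Astar
      = (∑ u ∈ Astar, wsum w (nbhd1 G u A)) / 2 + ∑ u ∈ Astar, charge G w A n u (n u) := by
    rw [wsum, Finset.sum_div, ← Finset.sum_add_distrib]
    refine Finset.sum_congr rfl fun u _ => ?_
    rw [charge, if_pos rfl]; ring
  -- neighborhood sum bound
  have hnb : ∑ u ∈ Astar, wsum w (nbhd1 G u A) ≤ ((d : ℝ) - 1) * wsum w A := by
    have hrw : ∀ u, wsum w (nbhd1 G u A)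
        = ∑ x ∈ A, if x = u ∨ G.Adj u x then w x else 0 := by
      intro u
      rw [wsum, nbhd1, nbhd, Finset.sum_filter]
      refine Finset.sum_congr rfl fun x _ => ?_
      congr 1
      simp
    calc ∑ u ∈ Astar, wsum w (nbhd1 G u A)
        = ∑ x ∈ A, ∑ u ∈ Astar, (if x = u ∨ G.Adj u x then w x else 0) := by
          simp_rw [hrw]; rw [Finset.sum_comm]
      _ ≤ ∑ x ∈ A, ((d : ℝ) - 1) * w x := by
          refine Finset.sum_le_sum fun x hx => ?_
          have hcard : (Astar.filter (fun u => x = u ∨ G.Adj u x)).card ≤ d - 1 := by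
            by_cases hxs : x ∈ Astar
            · have hsub : Astar.filter (fun u => x = u ∨ G.Adj u x) ⊆ {x} := by
                intro u hu
                rw [Finset.mem_filter] at hu
                rcases hu.2 with h | h
                · simp [h]
                · exact absurd h (hAstarIndep u hu.1 x hxs h.ne)
              have := Finset.card_le_card hsub
              simp at this
              omega
            · refine hG x _ ?_ ?_
              · intro u hu
                rw [Finset.mem_filter] at hu
                rcases hu.2 with h | h
                · exact absurd h.symm (fun he => hxs (he ▸ hu.1))
                · exact h.symm
              · intro a ha b hb
                exact hAstarIndep a (Finset.mem_of_mem_filter a ha)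
                  b (Finset.mem_of_mem_filter b hb)
          have hcardR : ((Astar.filter (fun u => x = u ∨ G.Adj u x)).card : ℝ)
              ≤ (d : ℝ) - 1 := by
            have h1 : ((d : ℕ) - 1 : ℕ) = d - 1 := rfl
            calc ((Astar.filter (fun u => x = u ∨ G.Adj u x)).card : ℝ)
                ≤ ((d - 1 : ℕ) : ℝ) := Nat.cast_le.mpr hcard
              _ = (d : ℝ) - 1 := by
                  rw [Nat.cast_sub (by omega)]; simp
          rw [← Finset.sum_filter, Finset.sum_const, nsmul_eq_mul]
          exact mul_le_mul_of_nonneg_right hcardR (hw x).le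
      _ = ((d : ℝ) - 1) * wsum w A := by rw [wsum, Finset.mul_sum]
  -- charge sum bound
  have hch : ∑ u ∈ Astar, charge G w A n u (n u)
      ≤ ∑ v ∈ A, ∑ u ∈ Astar.filter (fun u => 0 < charge G w A n u v), charge G w A n u v := by
    have hrw : ∀ v, ∑ u ∈ Astar.filter (fun u => 0 < charge G w A n u v), charge G w A n u v
        = ∑ u ∈ Astar, (if 0 < charge G w A n u v then charge G w A n u v else 0) :=
      fun v => Finset.sum_filter _ _
    simp_rw [hrw]
    rw [Finset.sum_comm]
    refine Finset.sum_le_sum fun u hu => ?_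
    have hnu : n u ∈ A := by
      have := (hn u hu).1
      rw [mem_nbhd1'] at this
      exact this.1
    have h1 : charge G w A n u (n u)
        ≤ (if 0 < charge G w A n u (n u) then charge G w A n u (n u) else 0) := by
      by_cases hc : 0 < charge G w A n u (n u)
      · simp [hc]
      · simp only [if_neg hc]; exact not_lt.mp hc
    refine le_trans h1 (Finset.single_le_sum (f := fun v =>
      if 0 < charge G w A n u v then charge G w A n u v else 0) ?_ hnu)
    intro v _
    by_cases hc : 0 < charge G w A n u v
    · simp only [if_pos hc]; exact hc.le
    · simp [hc]
  -- final bound on the charge double sum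
  have hBsub : Bbar ⊆ A := hBbar ▸ Finset.filter_subset _ _
  have hsplit : wsum w A = wsum w Bbar + wsum w (A \ Bbar) := by
    rw [wsum, wsum, wsum, ← Finset.sum_sdiff hBsub]; ring
  have hch2 : ∑ v ∈ A, ∑ u ∈ Astar.filter (fun u => 0 < charge G w A n u v), charge G w A n u v
      ≤ wsum w Bbar / 2 + (1 - ε) / 2 * wsum w (A \ Bbar) := by
    rw [← Finset.sum_sdiff hBsub]
    have hB1 : ∑ v ∈ Bbar, ∑ u ∈ Astar.filter (fun u => 0 < charge G w A n u v),
        charge G w A n u v ≤ wsum w Bbar / 2 := by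
      rw [wsum, Finset.sum_div]
      exact Finset.sum_le_sum fun v hv => key v (hBsub hv)
    have hB2 : ∑ v ∈ A \ Bbar, ∑ u ∈ Astar.filter (fun u => 0 < charge G w A n u v),
        charge G w A n u v ≤ (1 - ε) / 2 * wsum w (A \ Bbar) := by
      rw [wsum, Finset.mul_sum]
      refine Finset.sum_le_sum fun v hv => ?_
      have hvA : v ∈ A := (Finset.mem_sdiff.mp hv).1
      have hvB : v ∉ Bbar := (Finset.mem_sdiff.mp hv).2
      rw [hBbar, Finset.mem_filter] at hvB
      push_neg at hvB
      exact hvB hvA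
    linarith
  have hAB : (1 : ℝ) / 6 * wsum w A ≤ wsum w (A \ Bbar) := by linarith
  have hεpos : (0 : ℝ) < ε := by norm_num [hε]
  rw [hdecomp]
  have : ∑ u ∈ Astar, charge G w A n u (n u)
      ≤ wsum w Bbar / 2 + (1 - ε) / 2 * wsum w (A \ Bbar) := le_trans hch hch2
  have hεδ : wsum w Bbar / 2 + (1 - ε) / 2 * wsum w (A \ Bbar)
      ≤ (1 - ε * (1/6)) / 2 * wsum w A := by nlinarith [hAB, hsplit, hεpos]
  calc (∑ u ∈ Astar, wsum w (nbhd1 G u A)) / 2 + ∑ u ∈ Astar, charge G w A n u (n u)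
      ≤ ((d : ℝ) - 1) * wsum w A / 2 + (1 - ε * (1/6)) / 2 * wsum w A := by
        have := le_trans this hεδ
        linarith [hnb]
    _ = ((d : ℝ) - ε * (1 / 6)) / 2 * wsum w A := by ring


end
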